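/- Let A = (4/π)∫_{−c}^{c} x v(x) dx. Then |A| ≤ (c⁴/2) M'. -/

import Mathlib

open Real intervalIntegral

lemma cube_deriv (c : ℝ) {x : ℝ} (hu : 0 < c^2 - x^2) :
    HasDerivAt (fun y => (Real.sqrt (c^2 - y^2))^3) (-3 * x * Real.sqrt (c^2 - x^2)) x := by
  have h1 : HasDerivAt (fun y : ℝ => c^2 - y^2) (0 - 2*x) x := by
    simpa using (hasDerivAt_const x (c^2)).fun_sub (by simpa using hasDerivAt_pow 2 x)
  have h2 := (h1.sqrt hu.ne').fun_pow 3
  have h4 : (Real.sqrt (c^2 - x^2))^2 = c^2 - x^2 := Real.sq_sqrt hu.le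
  have hs0 : Real.sqrt (c^2 - x^2) ≠ 0 := (Real.sqrt_pos.2 hu).ne'
  convert! h2 using 1
  field_simp
  linear_combination

lemma J_eq : ∫ x in (-1:ℝ)..1, (Real.sqrt (1 - x^2))^3 = 3 * Real.pi / 8 := by
  have hcont : Continuous fun x : ℝ => (Real.sqrt (1 - x^2))^3 :=
    (Real.continuous_sqrt.comp (by continuity)).pow 3
  have hconts : Continuous fun x : ℝ => Real.sqrt (1 - x^2) :=
    Real.continuous_sqrt.comp (by continuity)
  have key : ∫ x in (-1:ℝ)..1,
      (4*(Real.sqrt (1 - x^2))^3 - 3*Real.sqrt (1 - x^2)) = 0 := by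
    have hd : ∀ x ∈ Set.Ioo (-1:ℝ) 1,
        HasDerivAt (fun y => y * (Real.sqrt (1 - y^2))^3)
          (4*(Real.sqrt (1 - x^2))^3 - 3*Real.sqrt (1 - x^2)) x := by
      intro x hx
      have hu : 0 < 1^2 - x^2 := by nlinarith [hx.1, hx.2]
      have h := (hasDerivAt_id x).fun_mul (by simpa using cube_deriv 1 hu)
      have h4 : (Real.sqrt (1 - x^2))^2 = 1 - x^2 := Real.sq_sqrt (by nlinarith [hx.1, hx.2])
      convert! h using 1
      simp only [id_eq, one_mul]
      linear_combination (3*Real.sqrt (1 - x^2)) * h4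
    have := intervalIntegral.integral_eq_sub_of_hasDeriv_right_of_le (by norm_num : (-1:ℝ) ≤ 1)
      ((continuous_id.mul hcont).continuousOn)
      (fun x hx => (hd x hx).hasDerivWithinAt)
      (((continuous_const.mul hcont).sub (continuous_const.mul hconts)).intervalIntegrable _ _)
    simpa using this
  have i1 : IntervalIntegrable (fun x : ℝ => (Real.sqrt (1 - x^2))^3) MeasureTheory.volume (-1) 1 :=
    hcont.intervalIntegrable _ _
  have i2 : IntervalIntegrable (fun x : ℝ => Real.sqrt (1 - x^2)) MeasureTheory.volume (-1) 1 :=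
    hconts.intervalIntegrable _ _
  rw [intervalIntegral.integral_sub (i1.const_mul 4) (i2.const_mul 3),
    intervalIntegral.integral_const_mul, intervalIntegral.integral_const_mul,
    integral_sqrt_one_sub_sq] at key
  linarith

theorem stmt_6
    (c : ℝ) (hc : 0 < c)
    (V V' V'' : ℝ → ℝ)
    (hV1 : ∀ x ∈ Set.Icc (-c) c, HasDerivAt V (V' x) x)
    (hV2 : ∀ x ∈ Set.Icc (-c) c, HasDerivAt V' (V'' x) x)
    (hV2c : ContinuousOn V'' (Set.Icc (-c) c))
    (hVnn : ∀ x ∈ Set.Icc (-c) c, 0 ≤ V x)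
    (r v : ℝ → ℝ)
    (hr : ∀ x, r x = Real.sqrt (c ^ 2 - x ^ 2))
    (hv : ∀ x, v x = r x * (1 + V x))
    (M M' M'' : ℝ)
    (hM : IsLUB (V '' Set.Icc (-c) c) M)
    (hM' : IsLUB ((fun x => |V' x|) '' Set.Icc (-c) c) M')
    (hM'' : IsLUB ((fun x => |V'' x|) '' Set.Icc (-c) c) M'')
    (A : ℝ) (hA : A = (4 / Real.pi) * ∫ x in (-c)..c, x * v x)
    :
    |A| ≤ c ^ 4 / 2 * M' := by
  have hcc : -c ≤ c := by linarith
  set w : ℝ → ℝ := fun x => Real.sqrt (c^2 - x^2) with hw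
  set F : ℝ → ℝ := fun x => -(1/3) * (w x)^3 with hF
  have hwc : Continuous w := Real.continuous_sqrt.comp (by continuity)
  have hFc : Continuous F := continuous_const.mul (hwc.pow 3)
  have hVc : ContinuousOn V (Set.Icc (-c) c) :=
    fun x hx => (hV1 x hx).continuousAt.continuousWithinAt
  have hV'c : ContinuousOn V' (Set.Icc (-c) c) :=
    fun x hx => (hV2 x hx).continuousAt.continuousWithinAt
  have hwc0 : w c = 0 := by simp [hw]
  have hwcm : w (-c) = 0 := by simp [hw]
  have hM'nn : 0 ≤ M' :=
    le_trans (abs_nonneg (V' 0)) (hM'.1 ⟨0, ⟨by linarith, hc.le⟩, rfl⟩)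
  -- integration by parts identity
  have hIoo : ∀ x ∈ Set.Ioo (-c) c, 0 < c^2 - x^2 := by
    intro x hx; nlinarith [hx.1, hx.2]
  have hFderiv : ∀ x ∈ Set.Ioo (-c) c, HasDerivAt F (x * w x) x := by
    intro x hx
    have := (cube_deriv c (hIoo x hx)).const_mul (-(1/3) : ℝ)
    convert! this using 1
    simp [hw]
    ring
  have hGderiv : ∀ x ∈ Set.Ioo (-c) c,
      HasDerivAt (fun y => F y * (1 + V y)) (x * w x * (1 + V x) + F x * V' x) x := by
    intro x hx
    have h1 := (hFderiv x hx).mul ((hV1 x (Set.Ioo_subset_Icc_self hx)).const_add 1)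
    exact h1
  have hintg : IntervalIntegrable (fun x => x * w x * (1 + V x)) MeasureTheory.volume (-c) c := by
    apply ContinuousOn.intervalIntegrable
    rw [Set.uIcc_of_le hcc]
    exact ((continuous_id.mul hwc).continuousOn).mul (continuousOn_const.add hVc)
  have hintFV : IntervalIntegrable (fun x => F x * V' x) MeasureTheory.volume (-c) c := by
    apply ContinuousOn.intervalIntegrable
    rw [Set.uIcc_of_le hcc]
    exact (hFc.continuousOn).mul hV'c
  have hftc : ∫ x in (-c)..c, (x * w x * (1 + V x) + F x * V' x) = 0 := by
    have := intervalIntegral.integral_eq_sub_of_hasDeriv_right_of_le hcc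
      ((hFc.continuousOn).mul (continuousOn_const.add hVc))
      (fun x hx => (hGderiv x hx).hasDerivWithinAt)
      (hintg.add hintFV)
    rw [this]
    simp [hF, hwc0, hwcm]
  have hsplit : ∫ x in (-c)..c, x * w x * (1 + V x) = -∫ x in (-c)..c, F x * V' x := by
    rw [intervalIntegral.integral_add hintg hintFV] at hftc
    linarith
  -- bound the integral
  have hbound : |∫ x in (-c)..c, F x * V' x| ≤ M' / 3 * (∫ x in (-c)..c, (w x)^3) := by
    calc |∫ x in (-c)..c, F x * V' x| ≤ ∫ x in (-c)..c, |F x * V' x| :=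
          intervalIntegral.abs_integral_le_integral_abs hcc
      _ ≤ ∫ x in (-c)..c, M' / 3 * (w x)^3 := by
          apply intervalIntegral.integral_mono_on hcc
          · apply ContinuousOn.intervalIntegrable
            rw [Set.uIcc_of_le hcc]
            exact ((hFc.continuousOn).mul hV'c).abs
          · exact (continuous_const.mul (hwc.pow 3)).intervalIntegrable _ _
          · intro x hx
            have hVx : |V' x| ≤ M' := hM'.1 ⟨x, hx, rfl⟩
            have hwnn : 0 ≤ w x := Real.sqrt_nonneg _
            have hw3 : (0:ℝ) ≤ (w x)^3 := pow_nonneg hwnn 3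
            have habsF : |F x * V' x| = 1/3 * (w x)^3 * |V' x| := by
              rw [abs_mul]
              congr 1
              rw [abs_of_nonpos (by nlinarith : -(1/3 : ℝ) * (w x)^3 ≤ 0)]
              ring
            rw [habsF]
            nlinarith [mul_le_mul_of_nonneg_left hVx (by nlinarith : (0:ℝ) ≤ 1/3 * (w x)^3)]
      _ = M' / 3 * ∫ x in (-c)..c, (w x)^3 := by
          rw [intervalIntegral.integral_const_mul]
  -- compute ∫ (w x)^3
  have hJ : ∫ x in (-c)..c, (w x)^3 = c^4 * (3 * Real.pi / 8) := by
    have hs := intervalIntegral.smul_integral_comp_mul_left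
      (a := (-1:ℝ)) (b := 1) (fun x => (Real.sqrt (c^2 - x^2))^3) c
    have hpt : ∀ x : ℝ, (Real.sqrt (c^2 - (c*x)^2))^3 = c^3 * (Real.sqrt (1 - x^2))^3 := by
      intro x
      have : c^2 - (c*x)^2 = c^2 * (1 - x^2) := by ring
      rw [this, Real.sqrt_mul (sq_nonneg c), Real.sqrt_sq hc.le]
      ring
    simp only [hpt] at hs
    rw [intervalIntegral.integral_const_mul, J_eq] at hs
    have hends : c * (-1) = -c ∧ c * 1 = c := by constructor <;> ring
    rw [hends.1, hends.2] at hs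
    rw [hw, ← hs, smul_eq_mul]
    ring
  -- finish
  have hπ := Real.pi_pos
  have habsint : |∫ x in (-c)..c, x * v x| ≤ M' * Real.pi * c^4 / 8 := by
    have heq : (∫ x in (-c)..c, x * v x) = ∫ x in (-c)..c, x * w x * (1 + V x) := by
      apply intervalIntegral.integral_congr
      intro x _
      simp [hv, hr, hw, mul_assoc]
    rw [heq, hsplit, abs_neg]
    calc |∫ x in (-c)..c, F x * V' x| ≤ M' / 3 * (∫ x in (-c)..c, (w x)^3) := hbound
      _ = M' * Real.pi * c^4 / 8 := by rw [hJ]; ring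
  rw [hA, abs_mul, abs_of_nonneg (by positivity : (0:ℝ) ≤ 4 / Real.pi)]
  calc 4 / Real.pi * |∫ x in (-c)..c, x * v x| ≤ 4 / Real.pi * (M' * Real.pi * c^4 / 8) := by
        apply mul_le_mul_of_nonneg_left habsint (by positivity)
    _ = c ^ 4 / 2 * M' := by field_simp; ring
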